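/- For every integer n ≥ 1 and all real numbers s, r, one has (s|s|^{1/n − 1} − r|r|^{1/n − 1})(s − r) = (1/n)|s − r|² ∫₀¹ |r + θ(s − r)|^{1/n − 1} dθ ≥ 0, with the convention 0·|0|^{1/n−1} = 0, and the expression equals 0 if and only if s = r. -/

import Mathlib

open intervalIntegral MeasureTheory

private lemma abs_rpow_ii {α : ℝ} (hα : -1 < α) (a b : ℝ) :
    IntervalIntegrable (fun x : ℝ => |x| ^ α) volume a b := by
  have key : ∀ c : ℝ, 0 ≤ c → IntervalIntegrable (fun x : ℝ => |x| ^ α) volume 0 c := by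
    intro c hc
    apply (intervalIntegrable_rpow' hα (a := 0) (b := c)).congr
    intro x hx
    rw [Set.uIoc_of_le hc] at hx
    simp only [abs_of_pos hx.1]
  have key2 : ∀ c : ℝ, IntervalIntegrable (fun x : ℝ => |x| ^ α) volume 0 c := by
    intro c
    rcases le_or_gt 0 c with hc | hc
    · exact key c hc
    · have h1 := key (-c) (by linarith)
      have h2 := (IntervalIntegrable.iff_comp_neg (f := fun x : ℝ => |x| ^ α)).mp h1
      simp only [abs_neg, neg_zero, neg_neg] at h2
      exact h2
  exact (key2 a).symm.trans (key2 b)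

private lemma int_pos {α : ℝ} (hα : -1 < α) {b : ℝ} (hb : 0 ≤ b) :
    ∫ x in (0:ℝ)..b, |x| ^ α = b ^ (α + 1) / (α + 1) := by
  rw [intervalIntegral.integral_congr (g := fun x : ℝ => x ^ α) ?_]
  · rw [integral_rpow (Or.inl hα), Real.zero_rpow (by linarith), sub_zero]
  · intro x hx
    rw [Set.uIcc_of_le hb] at hx
    simp [abs_of_nonneg hx.1]

private lemma int_gen {α : ℝ} (hα : -1 < α) (b : ℝ) :
    ∫ x in (0:ℝ)..b, |x| ^ α = Real.sign b * |b| ^ (α + 1) / (α + 1) := by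
  rcases le_or_gt 0 b with hb | hb
  · rw [int_pos hα hb]
    rcases eq_or_lt_of_le hb with h | h
    · simp [← h, Real.sign_zero, Real.zero_rpow (show α + 1 ≠ 0 by linarith)]
    · rw [Real.sign_of_pos h, abs_of_pos h, one_mul]
  · have key := intervalIntegral.integral_comp_neg (a := (0:ℝ)) (b := b)
      (fun x : ℝ => |x| ^ α)
    simp only [abs_neg, neg_zero] at key
    rw [key, intervalIntegral.integral_symm 0 (-b),
      int_pos hα (le_of_lt (neg_pos.mpr hb)), Real.sign_of_neg hb, abs_of_neg hb]
    ring

private lemma int_rs {α : ℝ} (hα : -1 < α) (r s : ℝ) :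
    ∫ x in r..s, |x| ^ α
      = Real.sign s * |s| ^ (α + 1) / (α + 1) - Real.sign r * |r| ^ (α + 1) / (α + 1) := by
  have h1 := intervalIntegral.integral_add_adjacent_intervals
    (abs_rpow_ii hα r 0) (abs_rpow_ii hα 0 s)
  rw [← h1, intervalIntegral.integral_symm 0 r, int_gen hα r, int_gen hα s]
  ring

private lemma sgn_strict {p : ℝ} (hp : 0 < p) :
    StrictMono (fun x : ℝ => Real.sign x * |x| ^ p) := by
  intro a b hab
  simp only []
  rcases lt_trichotomy a 0 with ha | ha | ha
  · rcases lt_trichotomy b 0 with hb | hb | hb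
    · rw [Real.sign_of_neg ha, Real.sign_of_neg hb, abs_of_neg ha, abs_of_neg hb]
      have := Real.rpow_lt_rpow (by linarith : (0:ℝ) ≤ -b) (by linarith : -b < -a) hp
      linarith
    · subst hb
      rw [Real.sign_of_neg ha, Real.sign_zero, abs_of_neg ha, zero_mul]
      have := Real.rpow_pos_of_pos (by linarith : (0:ℝ) < -a) p
      linarith
    · rw [Real.sign_of_neg ha, Real.sign_of_pos hb, abs_of_neg ha, abs_of_pos hb]
      have h1 := Real.rpow_pos_of_pos (by linarith : (0:ℝ) < -a) p
      have h2 := Real.rpow_pos_of_pos hb p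
      linarith
  · subst ha
    have hb : 0 < b := hab
    rw [Real.sign_zero, Real.sign_of_pos hb, abs_of_pos hb, zero_mul, one_mul]
    exact Real.rpow_pos_of_pos hb p
  · have hb : 0 < b := lt_trans ha hab
    rw [Real.sign_of_pos ha, Real.sign_of_pos hb, abs_of_pos ha, abs_of_pos hb,
      one_mul, one_mul]
    exact Real.rpow_lt_rpow ha.le hab hp

/-- For an integer `n ≥ 1` and reals `s, r` (writing `s|s|^{1/n−1} = sign(s)|s|^{1/n}`):
`(s|s|^{1/n−1} − r|r|^{1/n−1})(s − r) = (1/n)|s−r|² ∫₀¹ |r+θ(s−r)|^{1/n−1} dθ ≥ 0`,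
and the expression vanishes iff `s = r`. -/
theorem stmt_8 (n : ℕ) (hn : 1 ≤ n) (s r : ℝ) :
    ((Real.sign s * |s| ^ ((1 : ℝ) / n) - Real.sign r * |r| ^ ((1 : ℝ) / n)) * (s - r) =
      ((1 : ℝ) / n) * |s - r| ^ 2 *
        ∫ θ in (0:ℝ)..1, |r + θ * (s - r)| ^ ((1 : ℝ) / n - 1)) ∧
    0 ≤ (Real.sign s * |s| ^ ((1 : ℝ) / n) - Real.sign r * |r| ^ ((1 : ℝ) / n)) * (s - r) ∧
    ((Real.sign s * |s| ^ ((1 : ℝ) / n) - Real.sign r * |r| ^ ((1 : ℝ) / n)) * (s - r) = 0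
      ↔ s = r) := by
  have hn0 : (0:ℝ) < (n:ℝ) := by exact_mod_cast hn
  set p : ℝ := (1:ℝ) / (n:ℝ) with hpdef
  have hp : 0 < p := by positivity
  have hα : -1 < p - 1 := by linarith
  have pos : s ≠ r → 0 < (Real.sign s * |s| ^ p - Real.sign r * |r| ^ p) * (s - r) := by
    intro h
    rcases h.lt_or_gt with h | h
    · exact mul_pos_of_neg_of_neg (sub_neg.mpr (sgn_strict hp h)) (sub_neg.mpr h)
    · exact mul_pos (sub_pos.mpr (sgn_strict hp h)) (sub_pos.mpr h)
  have key : (Real.sign s * |s| ^ p - Real.sign r * |r| ^ p) * (s - r) =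
      ((1:ℝ)/n) * |s - r| ^ 2 * ∫ θ in (0:ℝ)..1, |r + θ * (s - r)| ^ (p - 1) := by
    rcases eq_or_ne s r with h | h
    · simp [h]
    · have hsr : s - r ≠ 0 := sub_ne_zero.mpr h
      have hc : ∫ θ in (0:ℝ)..1, |r + θ * (s - r)| ^ (p - 1)
          = (s - r)⁻¹ * ∫ x in r..s, |x| ^ (p - 1) := by
        have hcm := intervalIntegral.integral_comp_mul_add (a := (0:ℝ)) (b := 1)
          (fun x : ℝ => |x| ^ (p - 1)) hsr r
        simp only [mul_zero, zero_add, mul_one, smul_eq_mul, sub_add_cancel] at hcm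
        rw [← hcm]
        congr 1
        ext θ
        rw [show r + θ * (s - r) = (s - r) * θ + r by ring]
      rw [hc, int_rs hα r s, show p - 1 + 1 = p by ring, sq_abs, ← sub_div, hpdef,
        one_div, div_eq_mul_inv, inv_inv]
      field_simp
  refine ⟨key, ?_, ?_⟩
  · rcases eq_or_ne s r with h | h
    · simp [h]
    · exact (pos h).le
  · constructor
    · intro h0
      by_contra h
      exact (pos h).ne' h0
    · intro h
      simp [h]
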